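/- For all finite words ω, ω̄ ∈ Ω_1, one has ω <_{Ω_1} ω̄ if and only if 2^{s(ω)−1} + n_ω < 2^{s(ω̄)−1} + n_{ω̄}. -/
import Mathlib


/-- To a finite word `ω = (w₁, …, w_j)` (a list, head = `w₁`) associate the
nonnegative integer `n_ω` whose binary expansion is the concatenation of the
blocks `b̂_{w_j−1} b̂_{w_{j−1}−1} ⋯ b̂_{w_1−1}`, where `b̂_k` is a `0` followed
by `k` ones.  Appending the block `b̂_k` on the right of a numeral of value `v`
yields `v * 2^(k+1) + (2^k − 1)`. -/
def wordVal (ω : List ℕ) : ℕ :=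
  ω.reverse.foldl (fun v w => v * 2 ^ w + (2 ^ (w - 1) - 1)) 0

/-- The reverse lexicographic order `<_{Ω₁}` on finite words: first compare the
sums of the letters; for equal sums, compare the letters from the right,
lexicographically at the first position (from the right) where they differ. -/
def revLexLt (a b : List ℕ) : Prop :=
  a.sum < b.sum ∨
    (a.sum = b.sum ∧ ∃ t : ℕ, t < a.length ∧ t < b.length ∧
      a.reverse.take t = b.reverse.take t ∧ a.reverse.getD t 0 < b.reverse.getD t 0)

private def stp : ℕ → ℕ → ℕ := fun v w => v * 2 ^ w + (2 ^ (w - 1) - 1)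

private lemma wordVal_eq (a : List ℕ) : wordVal a = a.reverse.foldl stp 0 := rfl

private lemma foldl_stp (m : List ℕ) : ∀ v : ℕ, m.foldl stp v = v * 2 ^ m.sum + m.foldl stp 0 := by
  induction m with
  | nil => intro v; simp
  | cons w m ih =>
    intro v
    simp only [List.foldl_cons, List.sum_cons]
    rw [ih (stp v w), ih (stp 0 w)]
    simp only [stp, pow_add]
    ring

private lemma bound_stp : ∀ m : List ℕ, m ≠ [] → (∀ x ∈ m, 1 ≤ x) →
    2 * m.foldl stp 0 + 2 ≤ 2 ^ m.sum := by
  intro m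
  induction m with
  | nil => simp
  | cons w m ih =>
    intro _ h1
    have hw : 1 ≤ w := h1 w (by simp)
    obtain ⟨k, rfl⟩ : ∃ k, w = k + 1 := ⟨w - 1, by omega⟩
    rcases eq_or_ne m [] with rfl | hm
    · have hk : 1 ≤ 2 ^ k := Nat.one_le_two_pow
      simp only [List.foldl_cons, List.foldl_nil, List.sum_cons, List.sum_nil, stp]
      simp only [Nat.add_sub_cancel, zero_mul, zero_add, add_zero, pow_succ]
      omega
    · have hb := ih hm (fun x hx => h1 x (by simp [hx]))
      simp only [List.foldl_cons, List.sum_cons]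
      rw [foldl_stp m (stp 0 (k+1))]
      have hs : 1 ≤ 2 ^ m.sum := Nat.one_le_two_pow
      have hk : 1 ≤ 2 ^ k := Nat.one_le_two_pow
      have hstp : stp 0 (k+1) = 2 ^ k - 1 := by simp [stp]
      rw [hstp]
      obtain ⟨a, hA⟩ : ∃ a, 2 ^ k = a + 1 := ⟨2 ^ k - 1, by omega⟩
      have hpow : 2 ^ (k + 1 + m.sum) = 2 * ((a+1) * 2 ^ m.sum) := by
        rw [pow_add, pow_succ, ← hA]; ring
      rw [hpow, hA]
      simp only [Nat.add_sub_cancel]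
      nlinarith [hb, Nat.zero_le (a * 2 ^ m.sum)]

private lemma arith_key (a e c Wr Wr' : ℕ) (ha : 1 ≤ a) (he : 2 ≤ e)
    (hbnd : 2 * Wr + 2 ≤ e * c) :
    (a - 1) * (e * c) + Wr < (a * e - 1) * c + Wr' := by
  obtain ⟨x, rfl⟩ : ∃ x, a = x + 1 := ⟨a - 1, by omega⟩
  obtain ⟨f, rfl⟩ : ∃ f, e = f + 2 := ⟨e - 2, by omega⟩
  simp only [Nat.add_sub_cancel]
  have h1 : (x + 1) * (f + 2) - 1 = x * f + 2 * x + f + 1 := by ring_nf; omega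
  rw [h1]
  nlinarith [Nat.zero_le Wr', hbnd]

private lemma key_lt (p r r' : List ℕ) (w w' : ℕ) (hw : 1 ≤ w)
    (hr : ∀ x ∈ r, 1 ≤ x) (hlt : w < w') (hsum : w + r.sum = w' + r'.sum) :
    (p ++ w :: r).foldl stp 0 < (p ++ w' :: r').foldl stp 0 := by
  rw [List.foldl_append, List.foldl_append, foldl_stp (w :: r), foldl_stp (w' :: r')]
  have hsums : (w :: r).sum = (w' :: r').sum := by simp only [List.sum_cons]; omega
  rw [hsums]
  refine Nat.add_lt_add_left ?_ _
  rcases eq_or_ne r [] with rfl | hrne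
  · exfalso; simp only [List.sum_nil, add_zero] at hsum; omega
  · have hb := bound_stp r hrne hr
    simp only [List.foldl_cons]
    rw [foldl_stp r (stp 0 w), foldl_stp r' (stp 0 w')]
    obtain ⟨k, rfl⟩ : ∃ k, w = k + 1 := ⟨w - 1, by omega⟩
    obtain ⟨u, hu, rfl⟩ : ∃ u, 1 ≤ u ∧ w' = k + 1 + u := ⟨w' - (k+1), by omega, by omega⟩
    have hrs : r.sum = u + r'.sum := by omega
    have hstp1 : stp 0 (k + 1) = 2 ^ k - 1 := by simp [stp]
    have hstp2 : stp 0 (k + 1 + u) = 2 ^ k * 2 ^ u - 1 := by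
      simp [stp, Nat.add_sub_cancel, pow_add]
    rw [hstp1, hstp2, hrs, pow_add]
    exact arith_key (2 ^ k) (2 ^ u) (2 ^ r'.sum) _ _ Nat.one_le_two_pow
      (by have : (2:ℕ) ^ 1 ≤ 2 ^ u := Nat.pow_le_pow_right (by norm_num) hu; simpa using this)
      (by rw [← pow_add, ← hrs]; exact hb)

private lemma first_diff (m : List ℕ) : ∀ m' : List ℕ,
    (∃ t, t < m.length ∧ t < m'.length ∧ m.take t = m'.take t ∧ m.getD t 0 ≠ m'.getD t 0)
    ∨ m <+: m' ∨ m' <+: m := by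
  induction m with
  | nil => intro m'; right; left; exact List.nil_prefix
  | cons x m ih =>
    intro m'
    rcases m' with _ | ⟨y, m'⟩
    · right; right; exact List.nil_prefix
    rcases eq_or_ne x y with rfl | hxy
    · rcases ih m' with ⟨t, h1, h2, h3, h4⟩ | h | h
      · left; exact ⟨t + 1, by simpa using h1, by simpa using h2, by simp [h3],
          by simpa using h4⟩
      · right; left; exact (List.prefix_cons_inj _).mpr h
      · right; right; exact (List.prefix_cons_inj _).mpr h
    · left; exact ⟨0, by simp, by simp, by simp, by simpa using hxy⟩

private lemma eqsum_forward (a b : List ℕ) (h1 : ∀ x ∈ a, 1 ≤ x)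
    (hs : a.sum = b.sum) (t : ℕ) (hta : t < a.length) (htb : t < b.length)
    (hpre : a.reverse.take t = b.reverse.take t)
    (hlt : a.reverse.getD t 0 < b.reverse.getD t 0) :
    wordVal a < wordVal b := by
  rw [wordVal_eq, wordVal_eq]
  have hta' : t < a.reverse.length := by simpa using hta
  have htb' : t < b.reverse.length := by simpa using htb
  have hda : a.reverse.drop t = a.reverse[t] :: a.reverse.drop (t+1) :=
    List.drop_eq_getElem_cons hta'
  have hdb : b.reverse.drop t = b.reverse[t] :: b.reverse.drop (t+1) :=
    List.drop_eq_getElem_cons htb'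
  have hea : a.reverse = a.reverse.take t ++ a.reverse[t] :: a.reverse.drop (t+1) := by
    rw [← hda, List.take_append_drop]
  have heb : b.reverse = b.reverse.take t ++ b.reverse[t] :: b.reverse.drop (t+1) := by
    rw [← hdb, List.take_append_drop]
  have hga : a.reverse.getD t 0 = a.reverse[t] := List.getD_eq_getElem _ _ hta'
  have hgb : b.reverse.getD t 0 = b.reverse[t] := List.getD_eq_getElem _ _ htb'
  rw [hga, hgb] at hlt
  have hsum' : a.reverse[t] + (a.reverse.drop (t+1)).sum
      = b.reverse[t] + (b.reverse.drop (t+1)).sum := by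
    have h1 : a.reverse.sum = b.reverse.sum := by
      rw [List.sum_reverse, List.sum_reverse]; exact hs
    have h2 := congrArg List.sum hea
    have h3 := congrArg List.sum heb
    have h4 := congrArg List.sum hpre
    simp only [List.sum_append, List.sum_cons] at h2 h3
    omega
  have hw : 1 ≤ a.reverse[t] := h1 _ (by
    have := List.getElem_mem hta'
    exact List.mem_reverse.mp this)
  have hr : ∀ x ∈ a.reverse.drop (t+1), 1 ≤ x := fun x hx =>
    h1 x (List.mem_reverse.mp (List.mem_of_mem_drop hx))
  calc a.reverse.foldl stp 0
      = (a.reverse.take t ++ a.reverse[t] :: a.reverse.drop (t+1)).foldl stp 0 := by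
        rw [← hea]
    _ < (a.reverse.take t ++ b.reverse[t] :: b.reverse.drop (t+1)).foldl stp 0 :=
        key_lt _ _ _ _ _ hw hr hlt hsum'
    _ = b.reverse.foldl stp 0 := by rw [hpre, ← heb]

private lemma eqsum_iff (a b : List ℕ) (ha : ∀ x ∈ a, 1 ≤ x) (hb : ∀ x ∈ b, 1 ≤ x)
    (hs : a.sum = b.sum) : revLexLt a b ↔ wordVal a < wordVal b := by
  constructor
  · rintro (h | ⟨-, t, h1, h2, h3, h4⟩)
    · omega
    · exact eqsum_forward a b ha hs t h1 h2 h3 h4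
  · intro hv
    rcases first_diff a.reverse b.reverse with ⟨t, h1, h2, h3, h4⟩ | h | h
    · have h1' : t < a.length := by simpa using h1
      have h2' : t < b.length := by simpa using h2
      rcases lt_or_gt_of_ne h4 with hlt | hgt
      · exact Or.inr ⟨hs, t, h1', h2', h3, hlt⟩
      · exact absurd (eqsum_forward b a hb hs.symm t h2' h1' h3.symm hgt) (by omega)
    · obtain ⟨ext, hext⟩ := h
      rcases eq_or_ne ext [] with rfl | hne
      · have : a = b := by
          have := hext
          simp only [List.append_nil] at this
          exact List.reverse_injective this
        exact absurd hv (by rw [this]; omega)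
      · exfalso
        rcases ext with _ | ⟨e, ext'⟩
        · exact hne rfl
        have he : 1 ≤ e := hb e (by
          rw [← List.mem_reverse, ← hext]
          simp)
        have := congrArg List.sum hext
        simp only [List.sum_append, List.sum_cons, List.sum_reverse] at this
        omega
    · obtain ⟨ext, hext⟩ := h
      exfalso
      rcases eq_or_ne ext [] with rfl | hne
      · have : b = a := by
          have := hext
          simp only [List.append_nil] at this
          exact List.reverse_injective this
        exact absurd hv (by rw [this]; omega)
      · rcases ext with _ | ⟨e, ext'⟩
        · exact hne rfl
        have he : 1 ≤ e := ha e (by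
          rw [← List.mem_reverse, ← hext]
          simp)
        have := congrArg List.sum hext
        simp only [List.sum_append, List.sum_cons, List.sum_reverse] at this
        omega

private lemma sum_pos (a : List ℕ) (hne : a ≠ []) (h1 : ∀ x ∈ a, 1 ≤ x) : 1 ≤ a.sum := by
  rcases a with _ | ⟨x, a'⟩
  · exact absurd rfl hne
  · have := h1 x (by simp)
    simp only [List.sum_cons]
    omega

private lemma wordVal_bound (a : List ℕ) (hne : a ≠ []) (h1 : ∀ x ∈ a, 1 ≤ x) :
    2 * wordVal a + 2 ≤ 2 ^ a.sum := by
  rw [wordVal_eq, ← List.sum_reverse]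
  exact bound_stp a.reverse (by simpa using hne) (fun x hx => h1 x (List.mem_reverse.mp hx))

/-- For finite nonempty words `ω, ω̄` with letters in `{1, 2, 3, …}`:
`ω <_{Ω₁} ω̄` if and only if `2^{s(ω)−1} + n_ω < 2^{s(ω̄)−1} + n_ω̄`. -/
theorem revLexLt_iff_val_lt (a b : List ℕ)
    (ha : a ≠ [] ∧ ∀ x ∈ a, 1 ≤ x) (hb : b ≠ [] ∧ ∀ x ∈ b, 1 ≤ x) :
    revLexLt a b ↔
      2 ^ (a.sum - 1) + wordVal a < 2 ^ (b.sum - 1) + wordVal b := by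
  have hsa := sum_pos a ha.1 ha.2
  have hsb := sum_pos b hb.1 hb.2
  have hWa := wordVal_bound a ha.1 ha.2
  have hWb := wordVal_bound b hb.1 hb.2
  have hpa : 2 ^ a.sum = 2 * 2 ^ (a.sum - 1) := by
    conv_lhs => rw [show a.sum = (a.sum - 1) + 1 by omega]
    rw [pow_succ]; ring
  have hpb : 2 ^ b.sum = 2 * 2 ^ (b.sum - 1) := by
    conv_lhs => rw [show b.sum = (b.sum - 1) + 1 by omega]
    rw [pow_succ]; ring
  rcases lt_trichotomy a.sum b.sum with hlt | heq | hgt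
  · constructor
    · intro _
      have h1 : 2 ^ a.sum ≤ 2 ^ (b.sum - 1) := Nat.pow_le_pow_right (by norm_num) (by omega)
      omega
    · intro _
      exact Or.inl hlt
  · rw [eqsum_iff a b ha.2 hb.2 heq, heq]
    omega
  · constructor
    · rintro (h | ⟨h, -⟩) <;> omega
    · intro h
      have h1 : 2 ^ b.sum ≤ 2 ^ (a.sum - 1) := Nat.pow_le_pow_right (by norm_num) (by omega)
      omega
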